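/- arXiv:2506.08645 — 2 statements merged into one kernel-verified Lean document; each statement's English description precedes it below -/
import Mathlib

section
/- Let ψ_X, ψ_T be maps into a space Z, φ : Z → R^s a feature map with kernel k(z,z') = ⟨φ(z), φ(z')⟩, γ_X : X → Z' a map, φ' : Z' → R^d a feature map with kernel k'(w,w') = ⟨φ'(w), φ'(w')⟩, and C > 0. Define φ̃_{γ,X}(x) := (1/√2)·[√(C/d)·1_d + φ'(γ_X(x)), √(C/d)·1_d − φ'(γ_X(x))], φ̃_{γ,T} := √(C/(2d))·1_{2d}, E_X(x) := φ(ψ_X(x)) ⊗ φ̃_{γ,X}(x), and E_T(t) := φ(ψ_T(t)) ⊗ φ̃_{γ,T}. Then for all x, x' ∈ X and t, t' ∈ T: (1) ⟨E_X(x), E_X(x')⟩ = k(ψ_X(x), ψ_X(x')) · (C + k'(γ_X(x), γ_X(x'))); (2) ⟨E_T(t), E_T(t')⟩ = C · k(ψ_T(t), ψ_T(t')); (3) ⟨E_X(x), E_T(t)⟩ = C · k(ψ_X(x), ψ_T(t)). -/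
open Matrix

/-- Kronecker product of vectors indexed by a product type. -/
def vecKron {ι κ : Type*} (u : ι → ℝ) (v : κ → ℝ) : ι × κ → ℝ :=
  fun p => u p.1 * v p.2

/-- The symmetrized embedding. -/
noncomputable def symEmb {X : Type*} {d : ℕ} (C : ℝ) (φ : X → Fin d → ℝ) (x : X) :
    Fin d ⊕ Fin d → ℝ :=
  Sum.elim (fun i => (1 / Real.sqrt 2) * (Real.sqrt (C / d) + φ x i))
           (fun i => (1 / Real.sqrt 2) * (Real.sqrt (C / d) - φ x i))

/-- The constant "missing modality" embedding `√(C/(2d))·1_{2d}`. -/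
noncomputable def constEmb (d : ℕ) (C : ℝ) : Fin d ⊕ Fin d → ℝ :=
  fun _ => Real.sqrt (C / (2 * d))


lemma vecKron_dot {ι κ : Type*} [Fintype ι] [Fintype κ] (u u' : ι → ℝ) (v v' : κ → ℝ) :
    vecKron u v ⬝ᵥ vecKron u' v' = (u ⬝ᵥ u') * (v ⬝ᵥ v') := by
  simp only [vecKron, dotProduct, Fintype.sum_prod_type]
  rw [Finset.sum_mul_sum]
  exact Finset.sum_congr rfl fun i _ => Finset.sum_congr rfl fun j _ => by ring

/-- Proposition 2 (KrossFuse): inner products of the fused embeddings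
`E_X(x) = φ(ψ_X(x)) ⊗ φ̃_{γ,X}(x)` and `E_T(t) = φ(ψ_T(t)) ⊗ φ̃_{γ,T}`. -/
theorem krossFuse_inner_products {X T Z Z' : Type*} {s d : ℕ} (hd : 0 < d)
    (C : ℝ) (hC : 0 < C)
    (ψX : X → Z) (ψT : T → Z) (φ : Z → Fin s → ℝ)
    (k : Z → Z → ℝ) (hk : ∀ z z', k z z' = φ z ⬝ᵥ φ z')
    (γX : X → Z') (φ' : Z' → Fin d → ℝ)
    (k' : Z' → Z' → ℝ) (hk' : ∀ w w', k' w w' = φ' w ⬝ᵥ φ' w') :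
    (∀ x x' : X,
      vecKron (φ (ψX x)) (symEmb C (fun a => φ' (γX a)) x) ⬝ᵥ
        vecKron (φ (ψX x')) (symEmb C (fun a => φ' (γX a)) x')
        = k (ψX x) (ψX x') * (C + k' (γX x) (γX x'))) ∧
    (∀ t t' : T,
      vecKron (φ (ψT t)) (constEmb d C) ⬝ᵥ vecKron (φ (ψT t')) (constEmb d C)
        = C * k (ψT t) (ψT t')) ∧
    (∀ (x : X) (t : T),
      vecKron (φ (ψX x)) (symEmb C (fun a => φ' (γX a)) x) ⬝ᵥ
        vecKron (φ (ψT t)) (constEmb d C)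
        = C * k (ψX x) (ψT t)) := by
  have hCd : (0:ℝ) ≤ C / d := by positivity
  have ha : Real.sqrt (C / d) ^ 2 = C / d := Real.sq_sqrt hCd
  have h2 : Real.sqrt 2 ^ 2 = 2 := Real.sq_sqrt (by norm_num)
  have h2ne : Real.sqrt 2 ≠ 0 := by positivity
  have hdne : (d:ℝ) ≠ 0 := Nat.cast_ne_zero.mpr hd.ne'
  have hhalf : (1 / Real.sqrt 2) * (1 / Real.sqrt 2) = 1 / 2 := by
    rw [div_mul_div_comm, one_mul, Real.mul_self_sqrt (by norm_num : (0:ℝ) ≤ 2)]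
  have hconst : Real.sqrt (C / (2 * d)) = Real.sqrt (C / d) / Real.sqrt 2 := by
    rw [show C / (2 * (d:ℝ)) = C / d / 2 from by rw [div_div, mul_comm],
      Real.sqrt_div hCd]
  have hsymsym : ∀ (x x' : X),
      symEmb C (fun a => φ' (γX a)) x ⬝ᵥ symEmb C (fun a => φ' (γX a)) x'
        = C + k' (γX x) (γX x') := by
    intro x x'
    simp only [symEmb, dotProduct, Fintype.sum_sum_type, Sum.elim_inl, Sum.elim_inr,
      hk', ← Finset.sum_add_distrib]
    have key : ∀ i : Fin d,
        (1 / Real.sqrt 2 * (Real.sqrt (C / d) + φ' (γX x) i)) *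
          (1 / Real.sqrt 2 * (Real.sqrt (C / d) + φ' (γX x') i)) +
        (1 / Real.sqrt 2 * (Real.sqrt (C / d) - φ' (γX x) i)) *
          (1 / Real.sqrt 2 * (Real.sqrt (C / d) - φ' (γX x') i))
        = C / d + φ' (γX x) i * φ' (γX x') i := by
      intro i
      have e1 : (1 / Real.sqrt 2 * (Real.sqrt (C / d) + φ' (γX x) i)) *
          (1 / Real.sqrt 2 * (Real.sqrt (C / d) + φ' (γX x') i)) +
        (1 / Real.sqrt 2 * (Real.sqrt (C / d) - φ' (γX x) i)) *
          (1 / Real.sqrt 2 * (Real.sqrt (C / d) - φ' (γX x') i))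
        = ((1 / Real.sqrt 2) * (1 / Real.sqrt 2)) *
            (2 * Real.sqrt (C / d) ^ 2 + 2 * (φ' (γX x) i * φ' (γX x') i)) := by
        ring
      rw [e1, hhalf, ha]; ring
    rw [Finset.sum_congr rfl (fun i _ => key i), Finset.sum_add_distrib,
      Finset.sum_const, Finset.card_univ, Fintype.card_fin, nsmul_eq_mul,
      mul_div_cancel₀ C hdne]
  have hconstconst : constEmb d C ⬝ᵥ constEmb d C = C := by
    simp only [constEmb, dotProduct, Fintype.sum_sum_type, Finset.sum_const,
      Finset.card_univ, Fintype.card_fin, nsmul_eq_mul]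
    have h1 : Real.sqrt (C / (2 * d)) * Real.sqrt (C / (2 * d)) = C / (2 * d) :=
      Real.mul_self_sqrt (by positivity)
    rw [h1]
    have h2d : (2:ℝ) * d ≠ 0 := by positivity
    field_simp
    rw [Fintype.card_sum, Fintype.card_fin]; push_cast; ring
  have hsymconst : ∀ x : X,
      symEmb C (fun a => φ' (γX a)) x ⬝ᵥ constEmb d C = C := by
    intro x
    simp only [symEmb, constEmb, dotProduct, Fintype.sum_sum_type, Sum.elim_inl,
      Sum.elim_inr, ← Finset.sum_add_distrib]
    have key : ∀ i : Fin d,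
        (1 / Real.sqrt 2 * (Real.sqrt (C / d) + φ' (γX x) i)) * Real.sqrt (C / (2 * d)) +
        (1 / Real.sqrt 2 * (Real.sqrt (C / d) - φ' (γX x) i)) * Real.sqrt (C / (2 * d))
        = C / d := by
      intro i
      rw [hconst]
      have e1 : (1 / Real.sqrt 2 * (Real.sqrt (C / d) + φ' (γX x) i)) *
          (Real.sqrt (C / d) / Real.sqrt 2) +
          (1 / Real.sqrt 2 * (Real.sqrt (C / d) - φ' (γX x) i)) *
          (Real.sqrt (C / d) / Real.sqrt 2)
          = ((1 / Real.sqrt 2) * (1 / Real.sqrt 2)) * (2 * Real.sqrt (C / d) ^ 2) := by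
        ring
      rw [e1, hhalf, ha]; ring
    rw [Finset.sum_congr rfl (fun i _ => key i), Finset.sum_const, Finset.card_univ,
      Fintype.card_fin, nsmul_eq_mul, mul_div_cancel₀ C hdne]
  refine ⟨fun x x' => ?_, fun t t' => ?_, fun x t => ?_⟩
  · rw [vecKron_dot, hsymsym, hk]
  · rw [vecKron_dot, hconstconst, hk]; ring
  · rw [vecKron_dot, hsymconst, hk]; ring
end

section
/- Let U1 ∈ R^{l×d1} and U2 ∈ R^{l×d2} be random matrices with rows u_{1,i}^T and u_{2,i}^T, where all entries are i.i.d. with mean 0 and variance 1 (e.g., uniform on [−√3,√3]), and the rows across i are independent. For vectors a1, b1 ∈ R^{d1}, a2, b2 ∈ R^{d2}, define ã := (1/√l)(U1 a1) ⊙ (U2 a2) and b̃ := (1/√l)(U1 b1) ⊙ (U2 b2), where ⊙ is the Hadamard product. Then E[⟨ã, b̃⟩] = (a1^T b1)(a2^T b2). -/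
open Matrix MeasureTheory ProbabilityTheory

lemma rp_aux {Ω : Type*} [MeasurableSpace Ω] (μ : Measure Ω)
    [IsProbabilityMeasure μ] {d : ℕ} (X : Ω → Fin d → ℝ)
    (hint : ∀ j k, Integrable (fun ω => X ω j * X ω k) μ)
    (hcov : ∀ j k, ∫ ω, X ω j * X ω k ∂μ = if j = k then 1 else 0)
    (a b : Fin d → ℝ) :
    Integrable (fun ω => (X ω ⬝ᵥ a) * (X ω ⬝ᵥ b)) μ ∧
      ∫ ω, (X ω ⬝ᵥ a) * (X ω ⬝ᵥ b) ∂μ = a ⬝ᵥ b := by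
  have hexp : ∀ ω : Ω, (X ω ⬝ᵥ a) * (X ω ⬝ᵥ b)
      = ∑ j, ∑ k, (a j * b k) * (X ω j * X ω k) := by
    intro ω
    simp only [dotProduct, Finset.sum_mul_sum]
    congr 1; ext j; congr 1; ext k; ring
  have hintsum : Integrable (fun ω => ∑ j, ∑ k, (a j * b k) * (X ω j * X ω k)) μ := by
    apply integrable_finset_sum
    intro j _
    apply integrable_finset_sum
    intro k _
    exact (hint j k).const_mul _
  constructor
  · simpa only [← hexp] using hintsum
  · simp only [hexp]
    rw [integral_finset_sum _ (fun j _ => integrable_finset_sum _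
      (fun k _ => (hint j k).const_mul _))]
    have : ∀ j : Fin d, ∫ ω, ∑ k, (a j * b k) * (X ω j * X ω k) ∂μ = a j * b j := by
      intro j
      rw [integral_finset_sum _ (fun k _ => (hint j k).const_mul _)]
      have : ∀ k : Fin d, ∫ ω, (a j * b k) * (X ω j * X ω k) ∂μ
          = (a j * b k) * (if j = k then 1 else 0) := by
        intro k; rw [integral_const_mul, hcov]
      simp only [this]
      simp [Finset.sum_ite_eq, mul_ite]
    simp only [this, dotProduct]

/-- The RP-KrossFuse embedding `(1/√l)(U1 a1) ⊙ (U2 a2)` is an unbiased estimator of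
the Kronecker-product kernel: `E[⟨ã, b̃⟩] = (a1ᵀb1)(a2ᵀb2)`. -/
theorem rp_hadamard_unbiased {Ω : Type*} [MeasurableSpace Ω] (μ : Measure Ω)
    [IsProbabilityMeasure μ] {l d1 d2 : ℕ} (hl : 0 < l)
    (U1 : Ω → Fin l → Fin d1 → ℝ) (U2 : Ω → Fin l → Fin d2 → ℝ)
    (hm1 : Measurable U1) (hm2 : Measurable U2)
    (hmean1 : ∀ i j, ∫ ω, U1 ω i j ∂μ = 0) (hmean2 : ∀ i j, ∫ ω, U2 ω i j ∂μ = 0)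
    (hint1 : ∀ i j k, Integrable (fun ω => U1 ω i j * U1 ω i k) μ)
    (hint2 : ∀ i j k, Integrable (fun ω => U2 ω i j * U2 ω i k) μ)
    (hcov1 : ∀ i j k, ∫ ω, U1 ω i j * U1 ω i k ∂μ = if j = k then 1 else 0)
    (hcov2 : ∀ i j k, ∫ ω, U2 ω i j * U2 ω i k ∂μ = if j = k then 1 else 0)
    (hrows : iIndepFun
      (fun (i : Fin l) (ω : Ω) => (U1 ω i, U2 ω i)) μ)
    (hrowIndep : ∀ i, IndepFun (fun ω => U1 ω i) (fun ω => U2 ω i) μ)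
    (a1 b1 : Fin d1 → ℝ) (a2 b2 : Fin d2 → ℝ) :
    (∫ ω, ((fun i => (1 / Real.sqrt l) * ((U1 ω i ⬝ᵥ a1) * (U2 ω i ⬝ᵥ a2))) ⬝ᵥ
            (fun i => (1 / Real.sqrt l) * ((U1 ω i ⬝ᵥ b1) * (U2 ω i ⬝ᵥ b2)))) ∂μ)
      = (a1 ⬝ᵥ b1) * (a2 ⬝ᵥ b2) := by
  have h1 := fun i => rp_aux μ (fun ω => U1 ω i) (hint1 i) (hcov1 i) a1 b1
  have h2 := fun i => rp_aux μ (fun ω => U2 ω i) (hint2 i) (hcov2 i) a2 b2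
  -- independence of the two factors for each row
  have hIndep : ∀ i : Fin l, IndepFun
      (fun ω => (U1 ω i ⬝ᵥ a1) * (U1 ω i ⬝ᵥ b1))
      (fun ω => (U2 ω i ⬝ᵥ a2) * (U2 ω i ⬝ᵥ b2)) μ := by
    intro i
    have hdp : ∀ {d : ℕ} (c : Fin d → ℝ), Measurable (fun v : Fin d → ℝ => v ⬝ᵥ c) := by
      intro d c
      unfold dotProduct
      exact Finset.measurable_sum _ fun j _ => (measurable_pi_apply j).mul_const _
    exact (hrowIndep i).comp ((hdp a1).mul (hdp b1)) ((hdp a2).mul (hdp b2))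
  have hintProd : ∀ i : Fin l, Integrable (fun ω =>
      ((U1 ω i ⬝ᵥ a1) * (U1 ω i ⬝ᵥ b1)) * ((U2 ω i ⬝ᵥ a2) * (U2 ω i ⬝ᵥ b2))) μ :=
    fun i => (hIndep i).integrable_mul (h1 i).1 (h2 i).1
  have hexp : ∀ ω : Ω,
      ((fun i => (1 / Real.sqrt l) * ((U1 ω i ⬝ᵥ a1) * (U2 ω i ⬝ᵥ a2))) ⬝ᵥ
        (fun i => (1 / Real.sqrt l) * ((U1 ω i ⬝ᵥ b1) * (U2 ω i ⬝ᵥ b2))))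
      = ∑ i, (1 / (l : ℝ)) *
          (((U1 ω i ⬝ᵥ a1) * (U1 ω i ⬝ᵥ b1)) * ((U2 ω i ⬝ᵥ a2) * (U2 ω i ⬝ᵥ b2))) := by
    intro ω
    simp only [dotProduct]
    have hs : (1 / Real.sqrt l) * (1 / Real.sqrt l) = 1 / (l : ℝ) := by
      rw [div_mul_div_comm, one_mul, Real.mul_self_sqrt (Nat.cast_nonneg l)]
    congr 1; ext i
    rw [mul_mul_mul_comm, hs]
    ring
  simp only [hexp]
  rw [integral_finset_sum _ (fun i _ => ((hintProd i).const_mul _))]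
  have hterm : ∀ i : Fin l, ∫ ω, (1 / (l : ℝ)) *
      (((U1 ω i ⬝ᵥ a1) * (U1 ω i ⬝ᵥ b1)) * ((U2 ω i ⬝ᵥ a2) * (U2 ω i ⬝ᵥ b2))) ∂μ
      = (1 / (l : ℝ)) * ((a1 ⬝ᵥ b1) * (a2 ⬝ᵥ b2)) := by
    intro i
    have h := (hIndep i).integral_mul_eq_mul_integral (h1 i).1.aestronglyMeasurable (h2 i).1.aestronglyMeasurable
    rw [integral_const_mul,
      show (fun ω => ((U1 ω i ⬝ᵥ a1) * (U1 ω i ⬝ᵥ b1)) * ((U2 ω i ⬝ᵥ a2) * (U2 ω i ⬝ᵥ b2)))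
        = (fun ω => (U1 ω i ⬝ᵥ a1) * (U1 ω i ⬝ᵥ b1)) * (fun ω => (U2 ω i ⬝ᵥ a2) * (U2 ω i ⬝ᵥ b2))
        from rfl, h, (h1 i).2, (h2 i).2]
  simp only [hterm, Finset.sum_const, Finset.card_univ, Fintype.card_fin, nsmul_eq_mul]
  field_simp
end
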